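/- arXiv:1105.1571 — 2 statements merged into one kernel-verified Lean document; each statement's English description precedes it below -/
import Mathlib

section
/- Let ψ : ℝ → ℂ be a Schwartz function whose Fourier transform ψ̂ is supported in [1−Δ, 1+Δ] with 0 < Δ < 1, and set C_ψ = ∫_0^∞ conj(ψ̂(ξ))·ξ^{−1} dξ. Let η > 0, A ∈ ℝ, and f(t) = A·cos(2πηt). Then for every b ∈ ℝ, ∫_0^∞ W_f(a,b)·a^{−3/2} da = (A/2)·C_ψ·exp(2πiηb). In particular, the harmonic signal can be exactly reconstructed from its continuous wavelet transform by integrating over scales. -/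
open MeasureTheory


lemma intconj {g : ℝ → ℂ} (h : Integrable g) : Integrable (fun t => (starRingEnd ℂ) (g t)) := by
  refine ⟨Complex.continuous_conj.comp_aestronglyMeasurable h.1, ?_⟩
  simpa [HasFiniteIntegral] using h.2

lemma conj_fourier (g : ℝ → ℂ) (c : ℝ) :
    (∫ s : ℝ, Complex.exp ((2 * Real.pi * c * s : ℝ) * Complex.I) * (starRingEnd ℂ) (g s))
      = (starRingEnd ℂ) (FourierTransform.fourier g c) := by
  rw [Real.fourier_real_eq_integral_exp_smul, ← integral_conj]
  congr 1; ext s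
  rw [smul_eq_mul, map_mul, ← Complex.exp_conj, map_mul, Complex.conj_ofReal, Complex.conj_I]
  congr 2
  push_cast
  ring

lemma inner_calc (ψ : ℝ → ℂ) (hψ : Integrable ψ) (η A a b : ℝ) (ha : 0 < a) :
    (∫ t : ℝ, (A : ℂ) * ((Real.cos (2 * Real.pi * η * t) : ℝ) : ℂ)
        * (starRingEnd ℂ) (ψ ((t - b) / a)))
      = (a : ℂ) * (((A / 2 : ℝ) : ℂ) * Complex.exp ((2 * Real.pi * η * b : ℝ) * Complex.I)
            * (starRingEnd ℂ) (FourierTransform.fourier ψ (η * a))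
          + ((A / 2 : ℝ) : ℂ) * Complex.exp ((-(2 * Real.pi * η * b) : ℝ) * Complex.I)
            * (starRingEnd ℂ) (FourierTransform.fourier ψ (-(η * a)))) := by
  have hψc : Integrable (fun t : ℝ => (starRingEnd ℂ) (ψ ((t - b) / a))) :=
    intconj ((hψ.comp_div ha.ne').comp_sub_right b)
  have hint : ∀ c : ℝ, Integrable
      (fun t : ℝ => Complex.exp ((c * t : ℝ) * Complex.I) * (starRingEnd ℂ) (ψ ((t - b) / a))) := by
    intro c
    apply Integrable.bdd_mul (c := 1) hψc
    · exact (Complex.continuous_exp.comp (by continuity)).aestronglyMeasurable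
    · refine Filter.Eventually.of_forall (fun t => le_of_eq ?_)
      simpa using Complex.norm_exp_ofReal_mul_I (c * t)
  -- rewrite integrand as sum of two exponential pieces
  have step1 : (∫ t : ℝ, (A : ℂ) * ((Real.cos (2 * Real.pi * η * t) : ℝ) : ℂ)
        * (starRingEnd ℂ) (ψ ((t - b) / a)))
      = (∫ t : ℝ, ((A / 2 : ℝ) : ℂ) * (Complex.exp (((2 * Real.pi * η) * t : ℝ) * Complex.I)
            * (starRingEnd ℂ) (ψ ((t - b) / a))))
        + ∫ t : ℝ, ((A / 2 : ℝ) : ℂ) * (Complex.exp (((-(2 * Real.pi * η)) * t : ℝ) * Complex.I)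
            * (starRingEnd ℂ) (ψ ((t - b) / a))) := by
    rw [← integral_add ((hint (2 * Real.pi * η)).const_mul _) ((hint (-(2 * Real.pi * η))).const_mul _)]
    congr 1; ext t
    have h2 : ((Real.cos (2 * Real.pi * η * t) : ℝ) : ℂ) = Complex.cos ((2 * Real.pi * η * t : ℝ) : ℂ) := by
      simp [Complex.ofReal_cos]
    have := Complex.two_cos (x := ((2 * Real.pi * η * t : ℝ) : ℂ))
    rw [h2]
    have hexp : Complex.cos ((2 * Real.pi * η * t : ℝ) : ℂ)
        = (Complex.exp (((2 * Real.pi * η) * t : ℝ) * Complex.I)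
          + Complex.exp (((-(2 * Real.pi * η)) * t : ℝ) * Complex.I)) / 2 := by
      rw [eq_div_iff (two_ne_zero), mul_comm _ (2:ℂ), this]
      push_cast; ring_nf
    rw [hexp]
    push_cast; ring
  have step2 : ∀ c : ℝ,
      (∫ t : ℝ, Complex.exp ((c * t : ℝ) * Complex.I) * (starRingEnd ℂ) (ψ ((t - b) / a)))
        = (a : ℂ) * (Complex.exp ((c * b : ℝ) * Complex.I)
            * ∫ s : ℝ, Complex.exp ((c * a * s : ℝ) * Complex.I) * (starRingEnd ℂ) (ψ s)) := by
    intro c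
    set H : ℝ → ℂ := fun s => Complex.exp ((c * (a * s + b) : ℝ) * Complex.I) * (starRingEnd ℂ) (ψ s)
      with hH
    have e1 : (∫ t : ℝ, Complex.exp ((c * t : ℝ) * Complex.I) * (starRingEnd ℂ) (ψ ((t - b) / a)))
        = ∫ t : ℝ, (fun u : ℝ => H (u / a)) (t - b) := by
      congr 1; ext t
      simp only [hH]
      congr 3
      field_simp
      push_cast; ring
    rw [e1, integral_sub_right_eq_self (fun u : ℝ => H (u / a)) b,
      MeasureTheory.Measure.integral_comp_div H a, abs_of_pos ha]
    have e2 : (∫ s : ℝ, H s) = Complex.exp ((c * b : ℝ) * Complex.I)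
        * ∫ s : ℝ, Complex.exp ((c * a * s : ℝ) * Complex.I) * (starRingEnd ℂ) (ψ s) := by
      rw [← integral_const_mul]
      congr 1; ext s
      simp only [hH]
      rw [← mul_assoc, ← Complex.exp_add]
      congr 2
      push_cast; ring
    rw [e2, Complex.real_smul]
  have F1 : (∫ s : ℝ, Complex.exp (((2 * Real.pi * η) * a * s : ℝ) * Complex.I)
        * (starRingEnd ℂ) (ψ s)) = (starRingEnd ℂ) (FourierTransform.fourier ψ (η * a)) := by
    rw [← conj_fourier ψ (η * a)]
    congr 1; ext s; congr 2; push_cast; ring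
  have F2 : (∫ s : ℝ, Complex.exp (((-(2 * Real.pi * η)) * a * s : ℝ) * Complex.I)
        * (starRingEnd ℂ) (ψ s)) = (starRingEnd ℂ) (FourierTransform.fourier ψ (-(η * a))) := by
    rw [← conj_fourier ψ (-(η * a))]
    congr 1; ext s; congr 2; push_cast; ring
  have P1 := step2 (2 * Real.pi * η)
  have P2 := step2 (-(2 * Real.pi * η))
  rw [F1] at P1
  rw [F2] at P2
  rw [step1, integral_const_mul, integral_const_mul, P1, P2]
  have hb : ((-(2 * Real.pi * η)) * b : ℝ) = -(2 * Real.pi * η * b) := by ring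
  rw [hb]
  ring

/-- The continuous wavelet transform
`W_f(a,b) = a^{-1/2} ∫ f(t) conj(ψ((t-b)/a)) dt`. -/
noncomputable def CWT (ψ f : ℝ → ℂ) (a b : ℝ) : ℂ :=
  ((Real.sqrt a : ℝ) : ℂ)⁻¹ * ∫ t : ℝ, f t * (starRingEnd ℂ) (ψ ((t - b) / a))

theorem stmt8 (ψ : SchwartzMap ℝ ℂ) (Δ : ℝ) (hΔ0 : 0 < Δ) (hΔ1 : Δ < 1)
    (hsupp : ∀ ξ : ℝ, ξ ∉ Set.Icc (1 - Δ) (1 + Δ) → FourierTransform.fourier (⇑ψ : ℝ → ℂ) ξ = 0)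
    (Cψ : ℂ)
    (hCψ : Cψ = ∫ ξ in Set.Ioi (0 : ℝ),
      (starRingEnd ℂ) (FourierTransform.fourier (⇑ψ : ℝ → ℂ) ξ) * ((ξ : ℝ) : ℂ)⁻¹)
    (η A : ℝ) (hη : 0 < η) (f : ℝ → ℂ)
    (hf : ∀ t : ℝ, f t = (A : ℂ) * (Real.cos (2 * Real.pi * η * t) : ℝ)) :
    ∀ b : ℝ,
      ∫ a in Set.Ioi (0 : ℝ), CWT (⇑ψ) f a b * ((Real.sqrt a ^ 3 : ℝ) : ℂ)⁻¹ =
        ((A / 2 : ℝ) : ℂ) * Cψ * Complex.exp (2 * Real.pi * Complex.I * η * b) := by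
  intro b
  have hψint : Integrable (⇑ψ) := ψ.integrable
  set K : ℂ := ((A / 2 : ℝ) : ℂ) * Complex.exp ((2 * Real.pi * η * b : ℝ) * Complex.I) with hK
  set G : ℝ → ℂ := fun ξ => (starRingEnd ℂ) (FourierTransform.fourier (⇑ψ : ℝ → ℂ) ξ) * ((ξ : ℝ) : ℂ)⁻¹
    with hG
  have key : ∀ a ∈ Set.Ioi (0 : ℝ),
      CWT (⇑ψ) f a b * ((Real.sqrt a ^ 3 : ℝ) : ℂ)⁻¹ = (K * (η : ℂ)) * G (η * a) := by
    intro a ha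
    rw [Set.mem_Ioi] at ha
    have hI : (∫ t : ℝ, f t * (starRingEnd ℂ) (ψ ((t - b) / a)))
        = (a : ℂ) * (K * (starRingEnd ℂ) (FourierTransform.fourier (⇑ψ : ℝ → ℂ) (η * a))) := by
      have := inner_calc (⇑ψ) hψint η A a b ha
      have hzero : FourierTransform.fourier (⇑ψ : ℝ → ℂ) (-(η * a)) = 0 := by
        apply hsupp
        intro hc
        have h1 : (1 : ℝ) - Δ ≤ -(η * a) := hc.1
        nlinarith
      rw [hzero] at this
      simp only [map_zero, mul_zero, add_zero] at this
      calc (∫ t : ℝ, f t * (starRingEnd ℂ) (ψ ((t - b) / a)))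
          = ∫ t : ℝ, (A : ℂ) * ((Real.cos (2 * Real.pi * η * t) : ℝ) : ℂ)
              * (starRingEnd ℂ) (ψ ((t - b) / a)) := by
            congr 1; ext t; rw [hf t]
        _ = (a : ℂ) * (K * (starRingEnd ℂ) (FourierTransform.fourier (⇑ψ : ℝ → ℂ) (η * a))) := by
            rw [this, hK]
    have hsa : (0 : ℝ) < Real.sqrt a := Real.sqrt_pos.2 ha
    have hsq : ((Real.sqrt a : ℝ) : ℂ) ^ 2 = (a : ℝ) := by
      rw [← Complex.ofReal_pow, Real.sq_sqrt ha.le]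
    rw [CWT, hI, hG]
    have hηa : ((η * a : ℝ) : ℂ)⁻¹ = (η : ℂ)⁻¹ * ((a : ℝ) : ℂ)⁻¹ := by push_cast; rw [mul_inv]
    have hx : ((Real.sqrt a : ℝ) : ℂ) ≠ 0 := by
      simpa using hsa.ne'
    have hη' : (η : ℂ) ≠ 0 := by exact_mod_cast hη.ne'
    simp only [Complex.ofReal_pow]
    rw [hηa, ← hsq]
    field_simp
  rw [setIntegral_congr_fun measurableSet_Ioi key, integral_const_mul,
    integral_comp_mul_left_Ioi G 0 hη, mul_zero, ← hCψ]
  have hη' : (η : ℂ) ≠ 0 := by exact_mod_cast hη.ne'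
  rw [Complex.real_smul, Complex.ofReal_inv, hK]
  have hexp : Complex.exp (((2 * Real.pi * η * b : ℝ) : ℂ) * Complex.I)
      = Complex.exp (2 * Real.pi * Complex.I * η * b) := by
    congr 1; push_cast; ring
  rw [hexp]
  field_simp
end

section
/- Let ψ : ℝ → ℂ be a Schwartz function whose Fourier transform ψ̂ is supported in [1−Δ, 1+Δ] with 0 < Δ < 1/3. Let s : ℝ → ℝ be a continuous 2π-periodic function with Fourier expansion s(t) = Σ_{k∈ℤ} ŝ(k)·e^{ikt}, where Σ_{k∈ℤ} (1+|k|)·|ŝ(k)| < ∞. Let A : ℝ → ℝ be C¹, bounded and positive, φ : ℝ → ℝ be C² with c₁ ≤ φ'(t) ≤ M₂ for all t (0 < c₁ ≤ M₂), |A'(t)| ≤ ε·φ'(t) and |φ''(t)| ≤ ε·φ'(t) for all t, and set f(t) = A(t)·s(2πφ(t)). Then for every b ∈ ℝ and every scale a in the first-harmonic band (1−Δ)/φ'(b) ≤ a ≤ (1+Δ)/φ'(b), | W_f(a,b) − ŝ(1)·A(b)·exp(2πiφ(b))·a^{1/2}·conj(ψ̂(aφ'(b))) | ≤ ε·M₂·a^{3/2}·Σ_{k∈ℤ}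 |ŝ(k)|·( I₁ + π·|k|·‖A‖∞·a·I₂ ). That is, for signals with a general shape function (as in the model of the respiratory signal), the wavelet transform on the first-harmonic scale band is given by the first Fourier mode of the shape function, up to an O(ε) error. -/
open MeasureTheory

lemma expIL (x y : ℝ) :
    ‖Complex.exp ((x:ℂ) * Complex.I) - Complex.exp ((y:ℂ) * Complex.I)‖ ≤ |x - y| := by
  have hD : ∀ z : ℝ, HasDerivAt (fun t : ℝ => Complex.exp ((t:ℂ) * Complex.I))
      (Complex.exp ((z:ℂ) * Complex.I) * Complex.I) z := by
    intro z
    have h1 : HasDerivAt (fun w : ℂ => Complex.exp (w * Complex.I))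
        (Complex.exp ((z:ℂ) * Complex.I) * Complex.I) (z : ℂ) := by
      exact (Complex.hasDerivAt_exp ((z:ℂ) * Complex.I)).comp (z:ℂ)
        (hasDerivAt_mul_const (x := (z:ℂ)) Complex.I)
    exact h1.comp_ofReal
  have := Convex.norm_image_sub_le_of_norm_deriv_le
    (f := fun t : ℝ => Complex.exp ((t:ℂ) * Complex.I)) (s := Set.univ) (C := 1)
    (fun z _ => (hD z).differentiableAt)
    (fun z _ => by
      rw [(hD z).deriv]
      simp [Complex.norm_exp])
    convex_univ (Set.mem_univ y) (Set.mem_univ x)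
  simpa using this

lemma integral_comp_affine {F : Type*} [NormedAddCommGroup F] [NormedSpace ℝ F]
    (H : ℝ → F) {a : ℝ} (ha : 0 < a) (b : ℝ) :
    (∫ t : ℝ, H ((t - b) / a)) = a • ∫ x : ℝ, H x := by
  rw [show (∫ t : ℝ, H ((t - b) / a)) = ∫ t : ℝ, (fun u => H (u / a)) (t - b) from rfl,
    MeasureTheory.integral_sub_right_eq_self (fun u => H (u / a)) b,
    MeasureTheory.Measure.integral_comp_div H a, abs_of_pos ha]

lemma integrable_comp_affine {F : Type*} [NormedAddCommGroup F]
    {H : ℝ → F} (hH : Integrable H) {a : ℝ} (ha : a ≠ 0) (b : ℝ) :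
    Integrable (fun t : ℝ => H ((t - b) / a)) :=
  (hH.comp_div ha).comp_sub_right b

lemma taylor_quad {φ : ℝ → ℝ} (hφ : ContDiff ℝ 2 φ) {C : ℝ} (hC : 0 ≤ C)
    (hbound : ∀ x, |deriv (deriv φ) x| ≤ C) (b t : ℝ) :
    |φ t - φ b - deriv φ b * (t - b)| ≤ C / 2 * (t - b) ^ 2 := by
  have hφ2 : ContDiff ℝ ((1:ℕ) + 1) φ := by exact_mod_cast hφ
  have hd1 : Differentiable ℝ φ := hφ.differentiable (by norm_num)
  have hd2 : Differentiable ℝ (deriv φ) :=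
    (contDiff_succ_iff_deriv.mp hφ2).2.2.differentiable (by simp)
  have hlip : ∀ x : ℝ, |deriv φ x - deriv φ b| ≤ C * |x - b| := by
    intro x
    simpa [Real.norm_eq_abs] using
      Convex.norm_image_sub_le_of_norm_deriv_le (f := deriv φ) (s := Set.univ) (C := C)
        (fun y _ => hd2 y)
        (fun y _ => by simpa [Real.norm_eq_abs] using hbound y)
        convex_univ (Set.mem_univ b) (Set.mem_univ x)
  have hg : ∀ x : ℝ, HasDerivAt (fun y => φ y - φ b - deriv φ b * (y - b))
      (deriv φ x - deriv φ b) x := by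
    intro x
    have := ((hd1 x).hasDerivAt.sub_const (φ b)).sub
      (((hasDerivAt_id x).sub_const b).const_mul (deriv φ b))
    convert this using 1
    · rfl
    · rfl
    · rfl
    · simp
  have hcont : Continuous fun x => deriv φ x - deriv φ b := (hd2.continuous).sub continuous_const
  have hFTC : φ t - φ b - deriv φ b * (t - b) = ∫ x in b..t, (deriv φ x - deriv φ b) := by
    rw [intervalIntegral.integral_eq_sub_of_hasDerivAt (fun x _ => hg x)
      (hcont.intervalIntegrable b t)]
    ring
  rcases le_total b t with hbt | htb
  · have h1 : |∫ x in b..t, (deriv φ x - deriv φ b)| ≤ ∫ x in b..t, C * (x - b) := by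
      refine (intervalIntegral.abs_integral_le_integral_abs hbt).trans ?_
      refine intervalIntegral.integral_mono_on hbt ((hcont.abs).intervalIntegrable b t)
        ((by continuity : Continuous fun x : ℝ => C * (x - b)).intervalIntegrable b t) ?_
      intro x hx
      have := hlip x
      rwa [abs_of_nonneg (by linarith [hx.1] : (0:ℝ) ≤ x - b)] at this
    have h2 : (∫ x in b..t, C * (x - b)) = C / 2 * (t - b) ^ 2 := by
      have : ∀ x : ℝ, HasDerivAt (fun y : ℝ => C / 2 * (y - b) ^ 2) (C * (x - b)) x := by
        intro x
        have := (((hasDerivAt_id x).sub_const b).pow 2).const_mul (C / 2)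
        convert this using 1
        · rfl
        · rfl
        · funext y; simp
        · simp; ring
      rw [intervalIntegral.integral_eq_sub_of_hasDerivAt (fun x _ => this x)
        ((by continuity : Continuous fun x : ℝ => C * (x - b)).intervalIntegrable b t)]
      ring
    rw [hFTC]
    calc |∫ x in b..t, (deriv φ x - deriv φ b)| ≤ ∫ x in b..t, C * (x - b) := h1
      _ = C / 2 * (t - b) ^ 2 := h2
  · have hswap : (∫ x in b..t, (deriv φ x - deriv φ b))
        = -∫ x in t..b, (deriv φ x - deriv φ b) := by
      rw [intervalIntegral.integral_symm]
    have h1 : |∫ x in t..b, (deriv φ x - deriv φ b)| ≤ ∫ x in t..b, C * (b - x) := by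
      refine (intervalIntegral.abs_integral_le_integral_abs htb).trans ?_
      refine intervalIntegral.integral_mono_on htb ((hcont.abs).intervalIntegrable t b)
        ((by continuity : Continuous fun x : ℝ => C * (b - x)).intervalIntegrable t b) ?_
      intro x hx
      have := hlip x
      rwa [abs_of_nonpos (by linarith [hx.2] : x - b ≤ 0), neg_sub] at this
    have h2 : (∫ x in t..b, C * (b - x)) = C / 2 * (t - b) ^ 2 := by
      have : ∀ x : ℝ, HasDerivAt (fun y : ℝ => -(C / 2 * (b - y) ^ 2)) (C * (b - x)) x := by
        intro x
        have := ((((hasDerivAt_id x).neg.add_const b).pow 2).const_mul (C / 2)).neg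
        convert this using 1
        · rfl
        · rfl
        · funext y; simp only [id_eq, Pi.neg_apply, Pi.pow_apply]; ring_nf
        · simp; ring
      rw [intervalIntegral.integral_eq_sub_of_hasDerivAt (fun x _ => this x)
        ((by continuity : Continuous fun x : ℝ => C * (b - x)).intervalIntegrable t b)]
      ring
    rw [hFTC, hswap, abs_neg]
    calc |∫ x in t..b, (deriv φ x - deriv φ b)| ≤ ∫ x in t..b, C * (b - x) := h1
      _ = C / 2 * (t - b) ^ 2 := h2

lemma norm_exp_I_mul_int (k : ℤ) (y : ℝ) : ‖Complex.exp (Complex.I * (k:ℂ) * (y:ℂ))‖ = 1 := by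
  rw [show Complex.I * (k:ℂ) * (y:ℂ) = (((k:ℝ) * y : ℝ) : ℂ) * Complex.I by push_cast; ring]
  simp [Complex.norm_exp]

lemma exp_I_mul_int_eq (k : ℤ) (y : ℝ) :
    Complex.exp (Complex.I * (k:ℂ) * (y:ℂ)) = Complex.exp ((((k:ℝ) * y : ℝ) : ℂ) * Complex.I) := by
  congr 1
  push_cast
  ring

lemma conj_fourierIntegral (ψ : ℝ → ℂ) (w : ℝ) :
    (starRingEnd ℂ) (FourierTransform.fourier ψ w)
      = ∫ v : ℝ, Complex.exp (((2 * Real.pi * v * w : ℝ) : ℂ) * Complex.I)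
          * (starRingEnd ℂ) (ψ v) := by
  rw [Real.fourier_real_eq_integral_exp_smul, ← integral_conj]
  congr 1
  funext v
  rw [smul_eq_mul, map_mul, ← Complex.exp_conj]
  congr 2
  simp only [map_mul, Complex.conj_ofReal, Complex.conj_I]
  push_cast
  ring

set_option maxHeartbeats 2000000 in
theorem stmt12 (ψ : SchwartzMap ℝ ℂ) (Δ : ℝ) (hΔ0 : 0 < Δ) (hΔ1 : Δ < 1 / 3)
    (hsupp : ∀ ξ : ℝ, ξ ∉ Set.Icc (1 - Δ) (1 + Δ) → FourierTransform.fourier (⇑ψ : ℝ → ℂ) ξ = 0)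
    (s : ℝ → ℝ) (hs_cont : Continuous s)
    (hs_per : ∀ t : ℝ, s (t + 2 * Real.pi) = s t)
    (shat : ℤ → ℂ)
    (hsum : Summable (fun k : ℤ => (1 + |(k : ℝ)|) * ‖shat k‖))
    (hs_fourier : ∀ t : ℝ,
      ((s t : ℝ) : ℂ) = ∑' k : ℤ, shat k * Complex.exp (Complex.I * (k : ℂ) * (t : ℂ)))
    (ε c₁ M₂ : ℝ) (hε : 0 < ε) (hc₁ : 0 < c₁) (hc₁M₂ : c₁ ≤ M₂)
    (A : ℝ → ℝ) (φ : ℝ → ℝ)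
    (hA : ContDiff ℝ 1 A) (hAbd : BddAbove (Set.range A)) (hApos : ∀ t : ℝ, 0 < A t)
    (hφ : ContDiff ℝ 2 φ)
    (hφ'lo : ∀ t : ℝ, c₁ ≤ deriv φ t) (hφ'hi : ∀ t : ℝ, deriv φ t ≤ M₂)
    (hA' : ∀ t : ℝ, |deriv A t| ≤ ε * deriv φ t)
    (hφ'' : ∀ t : ℝ, |deriv (deriv φ) t| ≤ ε * deriv φ t)
    (f : ℝ → ℂ)
    (hf : ∀ t : ℝ, f t = ((A t * s (2 * Real.pi * φ t) : ℝ) : ℂ))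
    (I₁ I₂ Asup : ℝ)
    (hI₁ : I₁ = ∫ x : ℝ, |x| * ‖ψ x‖) (hI₂ : I₂ = ∫ x : ℝ, x ^ 2 * ‖ψ x‖)
    (hAsup : Asup = sSup (Set.range A)) :
    ∀ b : ℝ, ∀ a : ℝ,
      (1 - Δ) / deriv φ b ≤ a → a ≤ (1 + Δ) / deriv φ b →
      ‖CWT (⇑ψ) f a b -
          shat 1 * (A b : ℂ) * Complex.exp (2 * Real.pi * Complex.I * φ b) *
            ((Real.sqrt a : ℝ) : ℂ) *
            (starRingEnd ℂ) (FourierTransform.fourier (⇑ψ : ℝ → ℂ) (a * deriv φ b))‖ ≤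
        ε * M₂ * Real.sqrt a ^ 3 *
          ∑' k : ℤ, ‖shat k‖ * (I₁ + Real.pi * |(k : ℝ)| * Asup * a * I₂) := by
  intro b a ha1 ha2
  have hπ : (0:ℝ) < Real.pi := Real.pi_pos
  set c := deriv φ b with hc
  have hcpos : 0 < c := lt_of_lt_of_le hc₁ (hφ'lo b)
  have hΔ' : (0:ℝ) < 1 - Δ := by linarith
  have ha0 : 0 < a := lt_of_lt_of_le (div_pos hΔ' hcpos) ha1
  have hac_lo : 1 - Δ ≤ a * c := by
    rw [div_le_iff₀ hcpos] at ha1; linarith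
  have hac_hi : a * c ≤ 1 + Δ := by
    rw [le_div_iff₀ hcpos] at ha2; linarith
  have hM₂pos : 0 < M₂ := lt_of_lt_of_le hc₁ hc₁M₂
  have hεM₂ : 0 ≤ ε * M₂ := by positivity
  have hAb : ∀ t, A t ≤ Asup := fun t => hAsup ▸ le_csSup hAbd ⟨t, rfl⟩
  have hAsup0 : 0 < Asup := lt_of_lt_of_le (hApos 0) (hAb 0)
  have hI₁0 : 0 ≤ I₁ := hI₁ ▸ integral_nonneg fun x => by positivity
  have hI₂0 : 0 ≤ I₂ := hI₂ ▸ integral_nonneg fun x => by positivity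
  -- derivative bounds
  have hA'le : ∀ x, ‖deriv A x‖ ≤ ε * M₂ := fun x => by
    rw [Real.norm_eq_abs]
    exact (hA' x).trans (mul_le_mul_of_nonneg_left (hφ'hi x) hε.le)
  have hAmvt : ∀ t, |A t - A b| ≤ ε * M₂ * |t - b| := by
    intro t
    simpa [Real.norm_eq_abs] using
      Convex.norm_image_sub_le_of_norm_deriv_le (f := A) (s := Set.univ)
        (fun y _ => hA.differentiable one_ne_zero y) (fun y _ => hA'le y)
        convex_univ (Set.mem_univ b) (Set.mem_univ t)
  have hφT : ∀ t, |φ t - φ b - c * (t - b)| ≤ (ε * M₂) / 2 * (t - b) ^ 2 :=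
    taylor_quad hφ hεM₂
      (fun x => (hφ'' x).trans (mul_le_mul_of_nonneg_left (hφ'hi x) hε.le)) b
  -- integrability
  have hψc : Integrable (fun t : ℝ => ψ ((t - b) / a)) :=
    integrable_comp_affine (ψ.integrable (μ := volume)) ha0.ne' b
  have hψcC : Integrable (fun t : ℝ => (starRingEnd ℂ) (ψ ((t - b) / a))) := by
    exact hψc.mono (Complex.continuous_conj.comp_aestronglyMeasurable hψc.aestronglyMeasurable)
      (Filter.Eventually.of_forall fun t => le_of_eq (by rw [starRingEnd_apply, norm_star]))
  have hψn : Integrable (fun t : ℝ => ‖ψ ((t - b) / a)‖) := hψc.norm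
  have hI1int : Integrable (fun x : ℝ => |x| * ‖ψ x‖) := by
    simpa [Real.norm_eq_abs] using ψ.integrable_pow_mul (μ := volume) 1
  have hI2int : Integrable (fun x : ℝ => x ^ 2 * ‖ψ x‖) := by
    simpa [Real.norm_eq_abs, sq_abs] using ψ.integrable_pow_mul (μ := volume) 2
  set J : ℝ := ∫ x : ℝ, ‖ψ x‖ with hJ
  have hJc : (∫ t : ℝ, ‖ψ ((t - b) / a)‖) = a * J := by
    simpa [smul_eq_mul] using integral_comp_affine (fun x => ‖ψ x‖) ha0 b
  -- the series of terms
  set F : ℤ → ℝ → ℂ := fun k t =>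
    ((A t : ℝ) : ℂ) *
      (shat k * Complex.exp (Complex.I * (k : ℂ) * ((2 * Real.pi * φ t : ℝ) : ℂ))) *
      (starRingEnd ℂ) (ψ ((t - b) / a)) with hF
  have hFle : ∀ k t, ‖F k t‖ ≤ ‖shat k‖ * Asup * ‖ψ ((t - b) / a)‖ := by
    intro k t
    rw [hF]
    simp only [norm_mul, norm_exp_I_mul_int, Complex.norm_real, Real.norm_eq_abs,
      starRingEnd_apply, norm_star, mul_one]
    rw [abs_of_pos (hApos t)]
    have h1 : A t * ‖shat k‖ ≤ ‖shat k‖ * Asup := by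
      rw [mul_comm]; exact mul_le_mul_of_nonneg_left (hAb t) (norm_nonneg _)
    exact mul_le_mul_of_nonneg_right h1 (norm_nonneg _)
  have hFcont : ∀ k, Continuous (F k) := by
    intro k
    rw [hF]
    refine ((Complex.continuous_ofReal.comp hA.continuous).mul
      (continuous_const.mul (Complex.continuous_exp.comp
        (continuous_const.mul (Complex.continuous_ofReal.comp
          (continuous_const.mul hφ.continuous)))))).mul ?_
    exact Complex.continuous_conj.comp (ψ.continuous.comp
      ((continuous_id.sub continuous_const).div_const a))
  have hFint : ∀ k, Integrable (F k) := by
    intro k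
    rw [hF]
    refine Integrable.bdd_mul (c := Asup * ‖shat k‖) hψcC ?_ (Filter.Eventually.of_forall ?_)
    · exact ((Complex.continuous_ofReal.comp hA.continuous).mul
        (continuous_const.mul (Complex.continuous_exp.comp
          (continuous_const.mul (Complex.continuous_ofReal.comp
            (continuous_const.mul hφ.continuous)))))).aestronglyMeasurable
    · intro t
      simp only [norm_mul, norm_exp_I_mul_int, Complex.norm_real, Real.norm_eq_abs, mul_one]
      rw [abs_of_pos (hApos t)]
      exact mul_le_mul_of_nonneg_right (hAb t) (norm_nonneg _)
  have hshat_sum : Summable (fun k : ℤ => ‖shat k‖) := by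
    refine Summable.of_nonneg_of_le (fun k => norm_nonneg _) (fun k => ?_) hsum
    nlinarith [abs_nonneg ((k:ℝ)), norm_nonneg (shat k)]
  have hkshat_sum : Summable (fun k : ℤ => |(k:ℝ)| * ‖shat k‖) := by
    refine Summable.of_nonneg_of_le (fun k => by positivity) (fun k => ?_) hsum
    nlinarith [abs_nonneg ((k:ℝ)), norm_nonneg (shat k)]
  have hFnormint : ∀ k, (∫ t : ℝ, ‖F k t‖) ≤ ‖shat k‖ * Asup * (a * J) := by
    intro k
    calc (∫ t : ℝ, ‖F k t‖) ≤ ∫ t : ℝ, ‖shat k‖ * Asup * ‖ψ ((t - b) / a)‖ :=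
          integral_mono (hFint k).norm (hψn.const_mul _) (hFle k)
      _ = ‖shat k‖ * Asup * (a * J) := by rw [integral_const_mul, hJc]
  have hFsumnorm : Summable (fun k : ℤ => ∫ t : ℝ, ‖F k t‖) := by
    refine Summable.of_nonneg_of_le
      (fun k => integral_nonneg fun t => norm_nonneg _) hFnormint ?_
    simpa [mul_assoc] using hshat_sum.mul_right (Asup * (a * J))
  have hpt : ∀ t : ℝ, f t * (starRingEnd ℂ) (ψ ((t - b) / a)) = ∑' k : ℤ, F k t := by
    intro t
    rw [hf t, hF]
    push_cast
    rw [hs_fourier (2 * Real.pi * φ t), ← tsum_mul_left, ← tsum_mul_right]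
    exact tsum_congr fun k => by push_cast; ring
  have hswap : (∫ t : ℝ, f t * (starRingEnd ℂ) (ψ ((t - b) / a))) = ∑' k : ℤ, ∫ t : ℝ, F k t := by
    rw [show (fun t : ℝ => f t * (starRingEnd ℂ) (ψ ((t - b) / a))) = fun t => ∑' k : ℤ, F k t
      from funext hpt]
    exact (integral_tsum_of_summable_integral_norm hFint hFsumnorm).symm
  -- main terms
  set M : ℤ → ℂ := fun k =>
    ((A b : ℝ) : ℂ) *
      (shat k * Complex.exp (Complex.I * (k : ℂ) * ((2 * Real.pi * φ b : ℝ) : ℂ))) *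
      ((a : ℝ) : ℂ) * (starRingEnd ℂ) (FourierTransform.fourier (⇑ψ : ℝ → ℂ) (a * ((k:ℝ) * c))) with hM
  set L : ℤ → ℝ → ℂ := fun k t =>
    ((A b : ℝ) : ℂ) *
      (shat k * Complex.exp (Complex.I * (k : ℂ) * ((2 * Real.pi * (φ b + c * (t - b)) : ℝ) : ℂ))) *
      (starRingEnd ℂ) (ψ ((t - b) / a)) with hL
  have hLint : ∀ k, Integrable (L k) := by
    intro k
    rw [hL]
    refine Integrable.bdd_mul (c := Asup * ‖shat k‖) hψcC ((by fun_prop : Continuous fun t : ℝ =>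
        ((A b : ℝ) : ℂ) * (shat k * Complex.exp (Complex.I * (k : ℂ) *
          ((2 * Real.pi * (φ b + c * (t - b)) : ℝ) : ℂ)))).aestronglyMeasurable)
      (Filter.Eventually.of_forall fun t => ?_)
    simp only [norm_mul, norm_exp_I_mul_int, Complex.norm_real, Real.norm_eq_abs, mul_one]
    rw [abs_of_pos (hApos b)]
    exact mul_le_mul_of_nonneg_right (hAb b) (norm_nonneg _)
  have hLM : ∀ k : ℤ, (∫ t : ℝ, L k t) = M k := by
    intro k
    set w : ℝ := a * ((k:ℝ) * c) with hw
    set K : ℂ := ((A b : ℝ) : ℂ) *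
      (shat k * Complex.exp (Complex.I * (k : ℂ) * ((2 * Real.pi * φ b : ℝ) : ℂ))) with hK
    have hptL : ∀ t : ℝ, L k t
        = K * ((fun x : ℝ => Complex.exp (((2 * Real.pi * x * w : ℝ) : ℂ) * Complex.I) *
            (starRingEnd ℂ) (ψ x)) ((t - b) / a)) := by
      intro t
      simp only [hL, hK]
      rw [show (2 * Real.pi * ((t - b) / a) * w : ℝ) = 2 * Real.pi * ((k:ℝ) * c) * (t - b) by
        rw [hw]; field_simp]
      rw [show Complex.I * (k:ℂ) * ((2 * Real.pi * (φ b + c * (t - b)) : ℝ) : ℂ)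
          = Complex.I * (k:ℂ) * ((2 * Real.pi * φ b : ℝ) : ℂ)
            + ((2 * Real.pi * ((k:ℝ) * c) * (t - b) : ℝ) : ℂ) * Complex.I by push_cast; ring]
      rw [Complex.exp_add]
      ring
    rw [funext hptL, integral_const_mul,
      integral_comp_affine (fun x : ℝ => Complex.exp (((2 * Real.pi * x * w : ℝ) : ℂ) * Complex.I) *
        (starRingEnd ℂ) (ψ x)) ha0 b,
      ← conj_fourierIntegral (⇑ψ) w]
    rw [hM, hK, Complex.real_smul]
    ring
  have hM0 : ∀ k : ℤ, k ≠ 1 → M k = 0 := by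
    intro k hk
    have h0 : FourierTransform.fourier (⇑ψ : ℝ → ℂ) (a * ((k:ℝ) * c)) = 0 := by
      apply hsupp
      simp only [Set.mem_Icc, not_and_or, not_le]
      rcases lt_or_ge k 1 with hk0 | hk2
      · left
        have hk0' : (k:ℝ) ≤ 0 := by exact_mod_cast (by omega : k ≤ 0)
        nlinarith
      · right
        have hk2' : (2:ℝ) ≤ (k:ℝ) := by exact_mod_cast (by omega : 2 ≤ k)
        have h2 : (1 - Δ) * 2 ≤ (a * c) * (k:ℝ) :=
          mul_le_mul hac_lo hk2' (by norm_num) (le_trans hΔ'.le hac_lo)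
        nlinarith
    rw [hM]
    simp only [h0, map_zero, mul_zero]
  have hMsum : ∑' k : ℤ, M k = M 1 := tsum_eq_single 1 (fun k hk => hM0 k hk)
  -- error bound per mode
  set B : ℤ → ℝ := fun k =>
    ε * M₂ * a ^ 2 * (‖shat k‖ * (I₁ + Real.pi * |(k:ℝ)| * Asup * a * I₂)) with hB
  have hpt1 : ∀ t : ℝ, |t - b| * ‖ψ ((t - b) / a)‖
      = (fun x : ℝ => a * (|x| * ‖ψ x‖)) ((t - b) / a) := by
    intro t
    simp only
    rw [abs_div, abs_of_pos ha0]
    field_simp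
  have hpt2 : ∀ t : ℝ, (t - b) ^ 2 * ‖ψ ((t - b) / a)‖
      = (fun x : ℝ => a ^ 2 * (x ^ 2 * ‖ψ x‖)) ((t - b) / a) := by
    intro t
    simp only
    rw [div_pow]
    field_simp
  have hJ1int : Integrable (fun t : ℝ => |t - b| * ‖ψ ((t - b) / a)‖) := by
    rw [funext hpt1]
    exact integrable_comp_affine (hI1int.const_mul a) ha0.ne' b
  have hJ2int : Integrable (fun t : ℝ => (t - b) ^ 2 * ‖ψ ((t - b) / a)‖) := by
    rw [funext hpt2]
    exact integrable_comp_affine (hI2int.const_mul (a ^ 2)) ha0.ne' b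
  have hJ1 : (∫ t : ℝ, |t - b| * ‖ψ ((t - b) / a)‖) = a ^ 2 * I₁ := by
    rw [funext hpt1]
    refine (integral_comp_affine (fun x : ℝ => a * (|x| * ‖ψ x‖)) ha0 b).trans ?_
    rw [smul_eq_mul, integral_const_mul, hI₁]
    ring
  have hJ2 : (∫ t : ℝ, (t - b) ^ 2 * ‖ψ ((t - b) / a)‖) = a ^ 3 * I₂ := by
    rw [funext hpt2]
    refine (integral_comp_affine (fun x : ℝ => a ^ 2 * (x ^ 2 * ‖ψ x‖)) ha0 b).trans ?_
    rw [smul_eq_mul, integral_const_mul, hI₂]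
    ring
  set D : ℤ → ℝ → ℝ := fun k t =>
    ‖shat k‖ * (ε * M₂ * |t - b| + Real.pi * |(k:ℝ)| * Asup * (ε * M₂) * (t - b) ^ 2) *
      ‖ψ ((t - b) / a)‖ with hD
  have hDsplit : ∀ k, D k = fun t =>
      (‖shat k‖ * (ε * M₂)) * (|t - b| * ‖ψ ((t - b) / a)‖)
        + (‖shat k‖ * (Real.pi * |(k:ℝ)| * Asup * (ε * M₂))) *
            ((t - b) ^ 2 * ‖ψ ((t - b) / a)‖) := by
    intro k
    funext t
    rw [hD]
    ring
  have hDint : ∀ k, Integrable (D k) := by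
    intro k
    rw [hDsplit k]
    exact (hJ1int.const_mul _).add (hJ2int.const_mul _)
  have hDval : ∀ k, (∫ t : ℝ, D k t) = B k := by
    intro k
    rw [hDsplit k, integral_add (hJ1int.const_mul _) (hJ2int.const_mul _),
      integral_const_mul, integral_const_mul, hJ1, hJ2, hB]
    ring
  have hFD : ∀ k t, ‖F k t - L k t‖ ≤ D k t := by
    intro k t
    have hfactor : F k t - L k t
        = shat k * (((A t : ℝ) : ℂ) * Complex.exp (Complex.I * (k:ℂ) * ((2 * Real.pi * φ t : ℝ) : ℂ))
            - ((A b : ℝ) : ℂ) *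
              Complex.exp (Complex.I * (k:ℂ) * ((2 * Real.pi * (φ b + c * (t - b)) : ℝ) : ℂ))) *
          (starRingEnd ℂ) (ψ ((t - b) / a)) := by
      rw [hF, hL]
      ring
    rw [hfactor, norm_mul, norm_mul, starRingEnd_apply, norm_star]
    have hE : ‖((A t : ℝ) : ℂ) * Complex.exp (Complex.I * (k:ℂ) * ((2 * Real.pi * φ t : ℝ) : ℂ))
        - ((A b : ℝ) : ℂ) *
          Complex.exp (Complex.I * (k:ℂ) * ((2 * Real.pi * (φ b + c * (t - b)) : ℝ) : ℂ))‖
        ≤ ε * M₂ * |t - b| + Real.pi * |(k:ℝ)| * Asup * (ε * M₂) * (t - b) ^ 2 := by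
      rw [show ((A t : ℝ) : ℂ) * Complex.exp (Complex.I * (k:ℂ) * ((2 * Real.pi * φ t : ℝ) : ℂ))
          - ((A b : ℝ) : ℂ) *
            Complex.exp (Complex.I * (k:ℂ) * ((2 * Real.pi * (φ b + c * (t - b)) : ℝ) : ℂ))
          = (((A t : ℝ) : ℂ) - ((A b : ℝ) : ℂ)) *
              Complex.exp (Complex.I * (k:ℂ) * ((2 * Real.pi * φ t : ℝ) : ℂ))
            + ((A b : ℝ) : ℂ) *
              (Complex.exp (Complex.I * (k:ℂ) * ((2 * Real.pi * φ t : ℝ) : ℂ))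
                - Complex.exp (Complex.I * (k:ℂ) *
                    ((2 * Real.pi * (φ b + c * (t - b)) : ℝ) : ℂ))) by ring]
      refine (norm_add_le _ _).trans ?_
      have h1 : ‖(((A t : ℝ) : ℂ) - ((A b : ℝ) : ℂ)) *
          Complex.exp (Complex.I * (k:ℂ) * ((2 * Real.pi * φ t : ℝ) : ℂ))‖ ≤ ε * M₂ * |t - b| := by
        rw [norm_mul, norm_exp_I_mul_int, mul_one, ← Complex.ofReal_sub, Complex.norm_real,
          Real.norm_eq_abs]
        exact hAmvt t
      have h2 : ‖((A b : ℝ) : ℂ) *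
          (Complex.exp (Complex.I * (k:ℂ) * ((2 * Real.pi * φ t : ℝ) : ℂ))
            - Complex.exp (Complex.I * (k:ℂ) * ((2 * Real.pi * (φ b + c * (t - b)) : ℝ) : ℂ)))‖
          ≤ Real.pi * |(k:ℝ)| * Asup * (ε * M₂) * (t - b) ^ 2 := by
        rw [norm_mul, Complex.norm_real, Real.norm_eq_abs, abs_of_pos (hApos b)]
        have hd : ‖Complex.exp (Complex.I * (k:ℂ) * ((2 * Real.pi * φ t : ℝ) : ℂ))
            - Complex.exp (Complex.I * (k:ℂ) * ((2 * Real.pi * (φ b + c * (t - b)) : ℝ) : ℂ))‖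
            ≤ Real.pi * |(k:ℝ)| * (ε * M₂) * (t - b) ^ 2 := by
          rw [exp_I_mul_int_eq, exp_I_mul_int_eq]
          refine (expIL _ _).trans ?_
          rw [show (k:ℝ) * (2 * Real.pi * φ t) - (k:ℝ) * (2 * Real.pi * (φ b + c * (t - b)))
            = (2 * Real.pi * (k:ℝ)) * (φ t - φ b - c * (t - b)) by ring]
          rw [abs_mul, abs_mul, abs_of_pos (by positivity : (0:ℝ) < 2 * Real.pi)]
          calc 2 * Real.pi * |(k:ℝ)| * |φ t - φ b - c * (t - b)|
              ≤ 2 * Real.pi * |(k:ℝ)| * (ε * M₂ / 2 * (t - b) ^ 2) := by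
                have := hφT t
                gcongr
            _ = Real.pi * |(k:ℝ)| * (ε * M₂) * (t - b) ^ 2 := by ring
        calc A b * ‖Complex.exp (Complex.I * (k:ℂ) * ((2 * Real.pi * φ t : ℝ) : ℂ))
              - Complex.exp (Complex.I * (k:ℂ) * ((2 * Real.pi * (φ b + c * (t - b)) : ℝ) : ℂ))‖
            ≤ Asup * (Real.pi * |(k:ℝ)| * (ε * M₂) * (t - b) ^ 2) :=
              mul_le_mul (hAb b) hd (norm_nonneg _) hAsup0.le
          _ = Real.pi * |(k:ℝ)| * Asup * (ε * M₂) * (t - b) ^ 2 := by ring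
      exact add_le_add h1 h2
    rw [hD]
    have hψ0 : (0:ℝ) ≤ ‖ψ ((t - b) / a)‖ := norm_nonneg _
    have hs0 : (0:ℝ) ≤ ‖shat k‖ := norm_nonneg _
    exact mul_le_mul_of_nonneg_right (mul_le_mul_of_nonneg_left hE hs0) hψ0
  have hKey : ∀ k, ‖(∫ t : ℝ, F k t) - M k‖ ≤ B k := by
    intro k
    rw [← hLM k, ← integral_sub (hFint k) (hLint k)]
    refine (norm_integral_le_of_norm_le (hDint k)
      (Filter.Eventually.of_forall fun t => hFD k t)).trans ?_
    exact le_of_eq (hDval k)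
  -- summability for assembly
  have hsumF : Summable (fun k : ℤ => ∫ t : ℝ, F k t) :=
    Summable.of_norm (Summable.of_nonneg_of_le (fun k => norm_nonneg _)
      (fun k => norm_integral_le_integral_norm _) hFsumnorm)
  have hsumM : Summable M :=
    summable_of_ne_finset_zero (s := {1}) (fun k hk => hM0 k (by simpa using hk))
  have hinner : Summable (fun k : ℤ => ‖shat k‖ * (I₁ + Real.pi * |(k:ℝ)| * Asup * a * I₂)) := by
    refine Summable.congr ((hshat_sum.mul_left I₁).add
      (hkshat_sum.mul_left (Real.pi * Asup * a * I₂))) (fun k => by ring)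
  have hBsum : Summable B := by
    rw [hB]
    exact hinner.mul_left _
  have hnormsum : Summable (fun k : ℤ => ‖(∫ t : ℝ, F k t) - M k‖) :=
    Summable.of_nonneg_of_le (fun k => norm_nonneg _) hKey hBsum
  have htsum_le : ‖∑' k : ℤ, ((∫ t : ℝ, F k t) - M k)‖ ≤ ∑' k : ℤ, B k :=
    (norm_tsum_le_tsum_norm hnormsum).trans (Summable.tsum_le_tsum hKey hnormsum hBsum)
  -- assembling
  have hsqrt0 : (0:ℝ) < Real.sqrt a := Real.sqrt_pos.mpr ha0
  have hCWT : CWT (⇑ψ) f a b = ((Real.sqrt a : ℝ) : ℂ)⁻¹ * ∑' k : ℤ, ∫ t : ℝ, F k t := by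
    rw [show CWT (⇑ψ) f a b
      = ((Real.sqrt a : ℝ) : ℂ)⁻¹ * ∫ t : ℝ, f t * (starRingEnd ℂ) (ψ ((t - b) / a)) from rfl,
      hswap]
  have htarget : shat 1 * ((A b : ℝ) : ℂ) * Complex.exp (2 * Real.pi * Complex.I * (φ b : ℂ)) *
      ((Real.sqrt a : ℝ) : ℂ) * (starRingEnd ℂ) (FourierTransform.fourier (⇑ψ : ℝ → ℂ) (a * c))
      = ((Real.sqrt a : ℝ) : ℂ)⁻¹ * M 1 := by
    have hsq : ((Real.sqrt a : ℝ) : ℂ)⁻¹ * ((a : ℝ) : ℂ) = ((Real.sqrt a : ℝ) : ℂ) := by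
      rw [← Complex.ofReal_inv, ← Complex.ofReal_mul]
      congr 1
      field_simp
      rw [Real.sq_sqrt ha0.le]
    rw [hM]
    simp only [Int.cast_one, one_mul]
    rw [show Complex.I * (1:ℂ) * ((2 * Real.pi * φ b : ℝ) : ℂ)
      = 2 * Real.pi * Complex.I * (φ b : ℂ) by push_cast; ring]
    rw [show ((Real.sqrt a : ℝ) : ℂ)⁻¹ *
        (((A b : ℝ) : ℂ) * (shat 1 * Complex.exp (2 * Real.pi * Complex.I * (φ b : ℂ))) *
          ((a : ℝ) : ℂ) * (starRingEnd ℂ) (FourierTransform.fourier (⇑ψ : ℝ → ℂ) (a * c)))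
      = (((Real.sqrt a : ℝ) : ℂ)⁻¹ * ((a : ℝ) : ℂ)) *
          (((A b : ℝ) : ℂ) * (shat 1 * Complex.exp (2 * Real.pi * Complex.I * (φ b : ℂ))) *
            (starRingEnd ℂ) (FourierTransform.fourier (⇑ψ : ℝ → ℂ) (a * c))) by ring, hsq]
    ring
  have hBtsum : ∑' k : ℤ, B k
      = ε * M₂ * a ^ 2 * ∑' k : ℤ, ‖shat k‖ * (I₁ + Real.pi * |(k:ℝ)| * Asup * a * I₂) := by
    rw [hB]
    exact tsum_mul_left
  calc ‖CWT (⇑ψ) f a b -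
        shat 1 * ((A b : ℝ) : ℂ) * Complex.exp (2 * Real.pi * Complex.I * (φ b : ℂ)) *
          ((Real.sqrt a : ℝ) : ℂ) *
          (starRingEnd ℂ) (FourierTransform.fourier (⇑ψ : ℝ → ℂ) (a * c))‖
      = ‖((Real.sqrt a : ℝ) : ℂ)⁻¹‖ * ‖∑' k : ℤ, ((∫ t : ℝ, F k t) - M k)‖ := by
        rw [hCWT, htarget, ← hMsum, ← mul_sub, ← Summable.tsum_sub hsumF hsumM, norm_mul]
    _ ≤ (Real.sqrt a)⁻¹ * ∑' k : ℤ, B k := by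
        rw [show ‖((Real.sqrt a : ℝ) : ℂ)⁻¹‖ = (Real.sqrt a)⁻¹ by
          rw [← Complex.ofReal_inv, Complex.norm_real, Real.norm_eq_abs,
            abs_of_pos (by positivity)]]
        exact mul_le_mul_of_nonneg_left htsum_le (by positivity)
    _ = ε * M₂ * Real.sqrt a ^ 3 *
          ∑' k : ℤ, ‖shat k‖ * (I₁ + Real.pi * |(k:ℝ)| * Asup * a * I₂) := by
        rw [hBtsum, show a ^ 2 = Real.sqrt a ^ 4 by
          rw [show Real.sqrt a ^ 4 = (Real.sqrt a ^ 2) ^ 2 by ring, Real.sq_sqrt ha0.le]]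
        field_simp
        exact tsum_congr fun k => by ring
end
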